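/- If γ and γ' are κ×κ symmetric positive semidefinite matrices with γ ≤ γ' (meaning γ' − γ is positive semidefinite), then for any p ≥ 1 and any vector β ∈ ℝ^κ, the Hadamard products satisfy γ^{∘p} ∘ (ββᵀ) ≤ γ'^{∘p} ∘ (ββᵀ) in the positive semidefinite order, where γ^{∘p} denotes the entrywise p-th power. -/

import Mathlib

open Matrix

lemma hadamard_rank_one_quad {n : Type*} [Fintype n] [DecidableEq n]
    (w : n → ℝ) (C : Matrix n n ℝ) (x : n → ℝ) :
    (star x) ⬝ᵥ ((Matrix.hadamard (Matrix.vecMulVec w w) C).mulVec x)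
      = (star fun i => w i * x i) ⬝ᵥ (C.mulVec fun i => w i * x i) := by
  simp only [dotProduct, Matrix.mulVec, Matrix.hadamard_apply, Pi.star_apply,
    star_trivial, Matrix.vecMulVec_apply, Finset.mul_sum]
  refine Finset.sum_congr rfl fun i _ => Finset.sum_congr rfl fun j _ => ?_
  ring

lemma hadamard_rank_one_psd {n : Type*} [Fintype n] [DecidableEq n]
    (w : n → ℝ) {C : Matrix n n ℝ} (hC : C.PosSemidef) :
    (Matrix.hadamard (Matrix.vecMulVec w w) C).PosSemidef := by
  rw [Matrix.posSemidef_iff_dotProduct_mulVec]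
  constructor
  · ext i j
    have h := congrFun (congrFun hC.1 i) j
    simp only [Matrix.conjTranspose_apply, star_trivial] at h
    simp only [Matrix.conjTranspose_apply, Matrix.hadamard_apply, Matrix.vecMulVec_apply,
      star_trivial]
    rw [h]; ring
  · intro x
    rw [hadamard_rank_one_quad]
    exact hC.dotProduct_mulVec_nonneg _

lemma schur_psd {n : Type*} [Fintype n] [DecidableEq n]
    {A C : Matrix n n ℝ} (hA : A.PosSemidef) (hC : C.PosSemidef) :
    (Matrix.hadamard A C).PosSemidef := by
  obtain ⟨B, rfl⟩ : ∃ B : Matrix n n ℝ, A = Bᴴ * B := by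
    open scoped MatrixOrder in
    obtain ⟨X, hX, -, hXA⟩ :=
      CFC.exists_sqrt_of_isSelfAdjoint_of_quasispectrumRestricts hA.isHermitian
        (QuasispectrumRestricts.nnreal_of_nonneg hA.nonneg)
    refine ⟨X, ?_⟩
    rw [← Matrix.star_eq_conjTranspose, hX.star_eq, hXA]
  have decomp : Matrix.hadamard (Bᴴ * B) C
      = ∑ k, Matrix.hadamard (Matrix.vecMulVec (fun i => B k i) (fun i => B k i)) C := by
    ext i j
    simp [Matrix.sum_apply, Matrix.hadamard_apply, Matrix.vecMulVec_apply, Matrix.mul_apply,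
      Matrix.conjTranspose_apply, Finset.sum_mul]
  rw [decomp]
  exact Finset.sum_induction _ _ (fun a b ha hb => ha.add hb) Matrix.PosSemidef.zero
    (fun k _ => hadamard_rank_one_psd _ hC)

lemma vecMulVec_psd {n : Type*} [Fintype n] [DecidableEq n] (β : n → ℝ) :
    (Matrix.vecMulVec β β).PosSemidef := by
  rw [Matrix.posSemidef_iff_dotProduct_mulVec]
  constructor
  · ext i j
    simp [Matrix.vecMulVec_apply, Matrix.conjTranspose_apply, mul_comm]
  · intro x
    have : (star x) ⬝ᵥ ((Matrix.vecMulVec β β).mulVec x) = (∑ i, β i * x i) ^ 2 := by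
      simp only [dotProduct, Matrix.mulVec, Matrix.vecMulVec_apply, Pi.star_apply,
        RCLike.star_def, Finset.mul_sum, sq, Finset.sum_mul]
      congr 1; ext i
      congr 1; ext j
      simp only [RCLike.conj_to_real]
      ring
    rw [this]
    positivity

lemma pow_psd {n : Type*} [Fintype n] [DecidableEq n]
    {γ : Matrix n n ℝ} (hγ : γ.PosSemidef) (p : ℕ) :
    (Matrix.of fun i j => γ i j ^ p).PosSemidef := by
  induction p with
  | zero =>
    have : (Matrix.of fun i j : n => γ i j ^ 0) = Matrix.vecMulVec 1 1 := by
      ext i j; simp [Matrix.vecMulVec_apply]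
    rw [this]; exact vecMulVec_psd 1
  | succ k ih =>
    have : (Matrix.of fun i j : n => γ i j ^ (k + 1))
        = Matrix.hadamard (Matrix.of fun i j => γ i j ^ k) γ := by
      ext i j; simp [Matrix.hadamard_apply, pow_succ]
    rw [this]; exact schur_psd ih hγ

lemma pow_diff_psd {n : Type*} [Fintype n] [DecidableEq n]
    {γ γ' : Matrix n n ℝ} (hγ : γ.PosSemidef) (hγ' : γ'.PosSemidef)
    (hle : (γ' - γ).PosSemidef) (p : ℕ) :
    (Matrix.of fun i j => γ' i j ^ p - γ i j ^ p).PosSemidef := by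
  induction p with
  | zero =>
    have : (Matrix.of fun i j : n => γ' i j ^ 0 - γ i j ^ 0) = 0 := by
      ext i j; simp
    rw [this]; exact Matrix.PosSemidef.zero
  | succ k ih =>
    have : (Matrix.of fun i j : n => γ' i j ^ (k + 1) - γ i j ^ (k + 1))
        = Matrix.hadamard (Matrix.of fun i j => γ' i j ^ k) (γ' - γ)
          + Matrix.hadamard (Matrix.of fun i j => γ' i j ^ k - γ i j ^ k) γ := by
      ext i j
      simp [Matrix.hadamard_apply, Matrix.sub_apply, pow_succ]
      ring
    rw [this]
    exact (schur_psd (pow_psd hγ' k) hle).add (schur_psd ih hγ)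

/-- If γ ≤ γ' in the PSD order then γ^{∘p} ∘ (ββᵀ) ≤ γ'^{∘p} ∘ (ββᵀ) in the PSD order. -/
theorem stmt_1 (κ : ℕ) (γ γ' : Matrix (Fin κ) (Fin κ) ℝ)
    (hγ : γ.PosSemidef) (hγ' : γ'.PosSemidef) (hle : (γ' - γ).PosSemidef)
    (p : ℕ) (hp : 1 ≤ p) (β : Fin κ → ℝ) :
    (Matrix.hadamard (Matrix.of fun i j => γ' i j ^ p) (Matrix.vecMulVec β β)
      - Matrix.hadamard (Matrix.of fun i j => γ i j ^ p) (Matrix.vecMulVec β β)).PosSemidef := by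
  have : Matrix.hadamard (Matrix.of fun i j => γ' i j ^ p) (Matrix.vecMulVec β β)
      - Matrix.hadamard (Matrix.of fun i j => γ i j ^ p) (Matrix.vecMulVec β β)
      = Matrix.hadamard (Matrix.of fun i j => γ' i j ^ p - γ i j ^ p) (Matrix.vecMulVec β β) := by
    ext i j
    simp [Matrix.hadamard_apply, Matrix.sub_apply]
    ring
  rw [this]
  exact schur_psd (pow_diff_psd hγ hγ' hle p) (vecMulVec_psd β)
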